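/- Let Ψ(t) be an adapted discrete-time stochastic process satisfying |Ψ(t+1) − Ψ(t)| ≤ K almost surely, E[Ψ(t+1) − Ψ(t) | F_t] ≤ −η whenever Ψ(t) ≥ B (with 0 < η ≤ K), and Ψ(0) ≤ K + B. Then for every t ≥ 0, E[Ψ(t)] ≤ K(1 + ⌈B/K⌉) + K(K − η)/(2η). -/

import Mathlib

open MeasureTheory

lemma chord_aux {Kc u δ : ℝ} (hK : 0 < Kc) (h1 : -Kc ≤ δ) (h2 : δ ≤ Kc) :
    max (u + δ) 0 ≤ ((Kc - δ) * max (u - Kc) 0 + (Kc + δ) * max (u + Kc) 0) / (2 * Kc) := by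
  rcases le_or_gt (u + δ) 0 with h | h
  · rw [max_eq_right h]
    apply div_nonneg _ (by linarith)
    exact add_nonneg (mul_nonneg (by linarith) (le_max_right _ _))
      (mul_nonneg (by linarith) (le_max_right _ _))
  · rw [max_eq_left h.le, max_eq_left (by linarith : (0:ℝ) ≤ u + Kc)]
    rcases le_or_gt (u - Kc) 0 with h3 | h3
    · rw [max_eq_right h3, le_div_iff₀ (by linarith : (0:ℝ) < 2 * Kc)]
      nlinarith [mul_nonneg (by linarith : (0:ℝ) ≤ Kc - u) (by linarith : (0:ℝ) ≤ Kc - δ)]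
    · rw [max_eq_left h3.le, le_div_iff₀ (by linarith : (0:ℝ) < 2 * Kc)]
      nlinarith []

set_option maxHeartbeats 4000000 in
theorem stmt17 {Ω : Type*} {m0 : MeasurableSpace Ω} {μ : Measure Ω}
    [IsProbabilityMeasure μ]
    (ℱ : Filtration ℕ m0) (Ψ : ℕ → Ω → ℝ)
    (hadapted : Adapted ℱ Ψ)
    (hint : ∀ t, Integrable (Ψ t) μ)
    (K B η : ℝ) (hK : 0 < K) (hη : 0 < η) (hηK : η ≤ K) (hB : 0 ≤ B)
    (hbdd : ∀ t, ∀ᵐ ω ∂μ, |Ψ (t + 1) ω - Ψ t ω| ≤ K)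
    (hdrift : ∀ t, ∀ᵐ ω ∂μ, B ≤ Ψ t ω →
      (μ[fun ω' => Ψ (t + 1) ω' - Ψ t ω' | ℱ t]) ω ≤ -η)
    (hinit : ∀ᵐ ω ∂μ, Ψ 0 ω ≤ K + B) :
    ∀ t, ∫ ω, Ψ t ω ∂μ ≤ K * (1 + (⌈B / K⌉ : ℝ)) + K * ((K - η) / (2 * η)) := by
  have hK' : K ≠ 0 := ne_of_gt hK
  have hη' : η ≠ 0 := ne_of_gt hη
  have hKη : (0:ℝ) < K + η := by linarith
  have hKη' : K + η ≠ 0 := ne_of_gt hKη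
  set M : ℝ := K * (⌈B / K⌉ : ℝ) with hMdef
  have hBM : B ≤ M := by
    have h := Int.le_ceil (B / K)
    have h2 := mul_le_mul_of_nonneg_left h hK.le
    rw [mul_div_cancel₀ B hK'] at h2
    exact h2
  have hM0 : (0:ℝ) ≤ M := hB.trans hBM
  set p : ℝ := (K - η) / (2 * K) with hpdef
  set q : ℝ := (K + η) / (2 * K) with hqdef
  set r : ℝ := (K - η) / (K + η) with hrdef
  set γ : ℝ := K * (K + η) / (2 * η) with hγdef
  have hp0 : 0 ≤ p := div_nonneg (by linarith) (by linarith)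
  have hq0 : 0 ≤ q := div_nonneg (by linarith) (by linarith)
  have hr0 : 0 ≤ r := div_nonneg (by linarith) (by linarith)
  have hγ0 : 0 ≤ γ := div_nonneg (by nlinarith) (by linarith)
  have hγK : K ≤ γ := by
    rw [hγdef, le_div_iff₀ (by linarith : (0:ℝ) < 2*η)]
    nlinarith
  have hγr : γ * r + K = γ := by
    rw [hγdef, hrdef]; field_simp; ring
  have hqr2 : q * r ^ 2 + p = r := by
    rw [hpdef, hqdef, hrdef]; field_simp; ring
  have hmeas : ∀ t, StronglyMeasurable (Ψ t) := fun t => ((hadapted t).mono (ℱ.le t) le_rfl).stronglyMeasurable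
  have hInt : ∀ (t : ℕ) (a : ℝ), Integrable (fun ω => max (Ψ t ω - a) 0) μ := by
    intro t a
    have hsm : Measurable (fun ω => max (Ψ t ω - a) 0) :=
      ((hmeas t).measurable.sub measurable_const).max measurable_const
    refine Integrable.mono' ((hint t).abs.add (integrable_const |a|))
      hsm.aestronglyMeasurable ?_
    filter_upwards with ω
    simp only [Pi.add_apply]
    rw [Real.norm_eq_abs, abs_of_nonneg (le_max_right _ _)]
    refine max_le ?_ (by positivity)
    have h1 := le_abs_self (Ψ t ω)
    have h2 := neg_abs_le a
    linarith
  -- main one-step estimate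
  have step : ∀ (t : ℕ) (a : ℝ), M ≤ a →
      (∫ ω, max (Ψ (t + 1) ω - a) 0 ∂μ) ≤
        (∫ ω in {ω | M ≤ Ψ t ω},
            (q * max (Ψ t ω - (a + K)) 0 + p * max (Ψ t ω - (a - K)) 0) ∂μ) +
        ∫ ω in {ω | M ≤ Ψ t ω}ᶜ, max (Ψ t ω - (a - K)) 0 ∂μ := by
    intro t a ha
    set S : Set Ω := {ω | M ≤ Ψ t ω} with hSdef
    have hSm : MeasurableSet[ℱ t] S :=
      measurableSet_le measurable_const (hadapted t)
    have hSm0 : MeasurableSet S := ℱ.le t _ hSm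
    set A : Ω → ℝ := fun ω => max (Ψ t ω - (a + K)) 0 with hAdef
    set Bf : Ω → ℝ := fun ω => max (Ψ t ω - (a - K)) 0 with hBdef
    set Δ : Ω → ℝ := fun ω' => Ψ (t + 1) ω' - Ψ t ω' with hΔdef
    have hΔint : Integrable Δ μ := (hint (t + 1)).sub (hint t)
    have hΔbd : ∀ᵐ ω ∂μ, |Δ ω| ≤ K := hbdd t
    have hAint : Integrable A μ := hInt t (a + K)
    have hBint : Integrable Bf μ := hInt t (a - K)
    have h'int : Integrable (fun ω => max (Ψ (t + 1) ω - a) 0) μ := hInt (t + 1) a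
    have hABle : ∀ ω, A ω ≤ Bf ω := fun ω => max_le_max (by linarith) le_rfl
    have hA0 : ∀ ω, 0 ≤ A ω := fun ω => le_max_right _ _
    have hB0 : ∀ ω, 0 ≤ Bf ω := fun ω => le_max_right _ _
    have hsmA : Measurable A :=
      ((hmeas t).measurable.sub measurable_const).max measurable_const
    have hsmB : Measurable Bf :=
      ((hmeas t).measurable.sub measurable_const).max measurable_const
    have hsmΔ : Measurable Δ := (hmeas (t + 1)).measurable.sub (hmeas t).measurable
    rw [← integral_add_compl hSm0 h'int]
    apply add_le_add
    · -- part on S : chord bound + drift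
      have hchord : ∀ᵐ ω ∂μ, max (Ψ (t + 1) ω - a) 0 ≤
          ((K - Δ ω) * A ω + (K + Δ ω) * Bf ω) / (2 * K) := by
        filter_upwards [hΔbd] with ω hω
        have h1 := (abs_le.mp hω).1
        have h2 := (abs_le.mp hω).2
        have hch := chord_aux (u := Ψ t ω - a) hK h1 h2
        have e0 : Ψ (t + 1) ω - a = Ψ t ω - a + Δ ω := by rw [hΔdef]; ring
        have e1 : Ψ t ω - a - K = Ψ t ω - (a + K) := by ring
        have e2 : Ψ t ω - a + K = Ψ t ω - (a - K) := by ring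
        rw [e0]
        rw [e1, e2] at hch
        exact hch
      have hint1 : Integrable (fun ω => (K - Δ ω) * A ω) μ := by
        refine Integrable.mono' (hAint.const_mul (2 * K))
          ((measurable_const.sub hsmΔ).mul hsmA).aestronglyMeasurable ?_
        filter_upwards [hΔbd] with ω hω
        rw [Real.norm_eq_abs, abs_mul, abs_of_nonneg (hA0 ω)]
        have hb : |K - Δ ω| ≤ 2 * K := by
          rw [abs_le] at hω ⊢; constructor <;> linarith [hω.1, hω.2]
        exact mul_le_mul_of_nonneg_right hb (hA0 ω)
      have hint2 : Integrable (fun ω => (K + Δ ω) * Bf ω) μ := by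
        refine Integrable.mono' (hBint.const_mul (2 * K))
          ((measurable_const.add hsmΔ).mul hsmB).aestronglyMeasurable ?_
        filter_upwards [hΔbd] with ω hω
        rw [Real.norm_eq_abs, abs_mul, abs_of_nonneg (hB0 ω)]
        have hb : |K + Δ ω| ≤ 2 * K := by
          rw [abs_le] at hω ⊢; constructor <;> linarith [hω.1, hω.2]
        exact mul_le_mul_of_nonneg_right hb (hB0 ω)
      have hRint : Integrable (fun ω => ((K - Δ ω) * A ω + (K + Δ ω) * Bf ω) / (2 * K)) μ :=
        (hint1.add hint2).div_const _
      have hstep1 : (∫ ω in S, max (Ψ (t + 1) ω - a) 0 ∂μ) ≤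
          ∫ ω in S, ((K - Δ ω) * A ω + (K + Δ ω) * Bf ω) / (2 * K) ∂μ :=
        setIntegral_mono_ae h'int.integrableOn hRint.integrableOn hchord
      refine hstep1.trans ?_
      -- decompose
      have hdecomp : ∀ ω, ((K - Δ ω) * A ω + (K + Δ ω) * Bf ω) / (2 * K) =
          (q * A ω + p * Bf ω) + ((Δ ω + η) * (Bf ω - A ω)) / (2 * K) := by
        intro ω; rw [hpdef, hqdef]; field_simp; ring
      have hint3 : Integrable (fun ω => (q * A ω + p * Bf ω)) μ :=
        (hAint.const_mul q).add (hBint.const_mul p)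
      have hint4 : Integrable (fun ω => ((Δ ω + η) * (Bf ω - A ω)) / (2 * K)) μ := by
        apply Integrable.div_const
        refine Integrable.mono' ((hBint.sub hAint).const_mul (K + η))
          (((hsmΔ.add_const η)).mul (hsmB.sub hsmA)).aestronglyMeasurable ?_
        filter_upwards [hΔbd] with ω hω
        rw [Real.norm_eq_abs, abs_mul, abs_of_nonneg (by linarith [hABle ω] : 0 ≤ Bf ω - A ω)]
        have hb : |Δ ω + η| ≤ K + η := by
          rw [abs_le] at hω ⊢; constructor <;> linarith [hω.1, hω.2]
        exact mul_le_mul_of_nonneg_right hb (by linarith [hABle ω])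
      calc (∫ ω in S, ((K - Δ ω) * A ω + (K + Δ ω) * Bf ω) / (2 * K) ∂μ)
          = (∫ ω in S, ((q * A ω + p * Bf ω) + ((Δ ω + η) * (Bf ω - A ω)) / (2 * K)) ∂μ) := by
            apply integral_congr_ae; filter_upwards with ω; exact hdecomp ω
        _ = (∫ ω in S, (q * A ω + p * Bf ω) ∂μ) +
            (∫ ω in S, ((Δ ω + η) * (Bf ω - A ω)) / (2 * K) ∂μ) :=
            integral_add hint3.integrableOn hint4.integrableOn
        _ ≤ (∫ ω in S, (q * A ω + p * Bf ω) ∂μ) := by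
            have hkey : (∫ ω in S, ((Δ ω + η) * (Bf ω - A ω)) / (2 * K) ∂μ) ≤ 0 := by
              have e3 : (∫ ω in S, ((Δ ω + η) * (Bf ω - A ω)) / (2 * K) ∂μ)
                  = (∫ ω in S, (Δ ω + η) * (Bf ω - A ω) ∂μ) / (2 * K) := integral_div _ _
              rw [e3]
              apply div_nonpos_of_nonpos_of_nonneg _ (by linarith)
              set g : Ω → ℝ := S.indicator (fun ω => Bf ω - A ω) with hgdef
              have hg0 : ∀ ω, 0 ≤ g ω := by
                intro ω
                by_cases hω : ω ∈ S
                · rw [hgdef, Set.indicator_of_mem hω]; linarith [hABle ω]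
                · rw [hgdef, Set.indicator_of_notMem hω]
              have hgm : StronglyMeasurable[ℱ t] g := by
                have hsmA' : Measurable[ℱ t] A :=
                  (((hadapted t).sub measurable_const).max measurable_const)
                have hsmB' : Measurable[ℱ t] Bf :=
                  (((hadapted t).sub measurable_const).max measurable_const)
                exact ((hsmB'.sub hsmA').indicator hSm).stronglyMeasurable
              have hgint : Integrable g μ := (hBint.sub hAint).indicator hSm0
              have hgΔint : Integrable (fun ω => g ω * Δ ω) μ := by
                refine Integrable.mono' (hgint.abs.const_mul K)
                  (((hgm.mono (ℱ.le t)).measurable.mul hsmΔ)).aestronglyMeasurable ?_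
                filter_upwards [hΔbd] with ω hω
                rw [Real.norm_eq_abs, abs_mul]
                calc |g ω| * |Δ ω| ≤ |g ω| * K :=
                      mul_le_mul_of_nonneg_left hω (abs_nonneg _)
                  _ = K * |g ω| := mul_comm _ _
              have hpull : μ[fun ω => g ω * Δ ω | ℱ t] =ᵐ[μ] fun ω => g ω * (μ[Δ | ℱ t]) ω := by
                have h := condExp_mul_of_stronglyMeasurable_left hgm hgΔint hΔint
                exact h
              have hDint : Integrable (μ[Δ | ℱ t]) μ := integrable_condExp
              have hDbd : ∀ᵐ ω ∂μ, |(μ[Δ | ℱ t]) ω| ≤ K := by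
                have h1 : Δ ≤ᵐ[μ] fun _ => K := hΔbd.mono fun ω h => (abs_le.mp h).2
                have h2 : (fun _ => -K) ≤ᵐ[μ] Δ := hΔbd.mono fun ω h => (abs_le.mp h).1
                have hc1 := condExp_mono (m := ℱ t) hΔint (integrable_const K) h1
                have hc2 := condExp_mono (m := ℱ t) (integrable_const (-K)) hΔint h2
                rw [condExp_const (ℱ.le t)] at hc1
                rw [condExp_const (ℱ.le t)] at hc2
                filter_upwards [hc1, hc2] with ω e1 e2
                rw [abs_le]; exact ⟨e2, e1⟩
              have hgDint : Integrable (fun ω => g ω * (μ[Δ | ℱ t]) ω) μ := by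
                refine Integrable.mono' (hgint.abs.const_mul K)
                  (((hgm.mono (ℱ.le t)).measurable.mul
                    ((stronglyMeasurable_condExp (m := ℱ t)).mono (ℱ.le t)).measurable)).aestronglyMeasurable ?_
                filter_upwards [hDbd] with ω hω
                rw [Real.norm_eq_abs, abs_mul]
                calc |g ω| * |(μ[Δ | ℱ t]) ω| ≤ |g ω| * K :=
                      mul_le_mul_of_nonneg_left hω (abs_nonneg _)
                  _ = K * |g ω| := mul_comm _ _
              have e4 : (∫ ω in S, (Δ ω + η) * (Bf ω - A ω) ∂μ)
                  = (∫ ω, g ω * Δ ω ∂μ) + η * ∫ ω, g ω ∂μ := by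
                rw [← integral_indicator hSm0]
                have e5 : S.indicator (fun ω => (Δ ω + η) * (Bf ω - A ω)) =
                    fun ω => g ω * Δ ω + η * g ω := by
                  funext ω
                  by_cases hω : ω ∈ S
                  · rw [Set.indicator_of_mem hω, hgdef, Set.indicator_of_mem hω]; ring
                  · rw [Set.indicator_of_notMem hω, hgdef, Set.indicator_of_notMem hω]; ring
                rw [e5, integral_add hgΔint (hgint.const_mul η), integral_const_mul η _]
              rw [e4]
              have e6 : (∫ ω, g ω * Δ ω ∂μ) = ∫ ω, g ω * (μ[Δ | ℱ t]) ω ∂μ := by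
                calc (∫ ω, g ω * Δ ω ∂μ)
                    = ∫ ω, (μ[fun ω => g ω * Δ ω | ℱ t]) ω ∂μ :=
                      (integral_condExp (ℱ.le t)).symm
                  _ = ∫ ω, g ω * (μ[Δ | ℱ t]) ω ∂μ := integral_congr_ae hpull
              rw [e6]
              have e7 : (∫ ω, g ω * (μ[Δ | ℱ t]) ω ∂μ) ≤ ∫ ω, g ω * (-η) ∂μ := by
                refine integral_mono_ae hgDint (hgint.mul_const _) ?_
                filter_upwards [hdrift t] with ω hω
                by_cases hmem : ω ∈ S
                · have hD : (μ[Δ | ℱ t]) ω ≤ -η := hω (hBM.trans hmem)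
                  exact mul_le_mul_of_nonneg_left hD (hg0 ω)
                · have : g ω = 0 := by rw [hgdef, Set.indicator_of_notMem hmem]
                  rw [this]; simp
              have e8 : (∫ ω, g ω * (-η) ∂μ) = -η * ∫ ω, g ω ∂μ := by
                have e9 : (fun ω => g ω * (-η)) = fun ω => -η * g ω := by
                  funext ω; ring
                rw [e9, integral_const_mul (-η) _]
              linarith [e7, e8.le, e8.ge]
            linarith
    · -- part on the complement
      refine setIntegral_mono_ae h'int.integrableOn hBint.integrableOn ?_
      filter_upwards [hΔbd] with ω hω
      have h2 := (abs_le.mp hω).2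
      refine max_le_max ?_ le_rfl
      have : Ψ (t + 1) ω - Ψ t ω ≤ K := h2
      linarith
  -- main induction
  have hmain : ∀ (t : ℕ) (j : ℕ),
      (∫ ω, max (Ψ t ω - (M + (j : ℝ) * K)) 0 ∂μ) ≤ γ * r ^ j := by
    intro t
    induction t with
    | zero =>
      intro j
      have hle : ∀ᵐ ω ∂μ, max (Ψ 0 ω - (M + (j : ℝ) * K)) 0 ≤ γ * r ^ j := by
        filter_upwards [hinit] with ω h0
        have hrj : 0 ≤ γ * r ^ j := mul_nonneg hγ0 (pow_nonneg hr0 _)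
        rcases Nat.eq_zero_or_pos j with hj | hj
        · subst hj
          refine max_le ?_ hrj
          have h1 : Ψ 0 ω - (M + (0 : ℝ) * K) ≤ K := by
            push_cast
            linarith
          have h2 : γ * r ^ 0 = γ := by rw [pow_zero, mul_one]
          rw [Nat.cast_zero]
          linarith
        · refine max_le ?_ hrj
          have h1 : (1 : ℝ) ≤ (j : ℝ) := by exact_mod_cast hj
          have h2 : K ≤ (j : ℝ) * K := by nlinarith
          have : Ψ 0 ω - (M + (j : ℝ) * K) ≤ 0 := by linarith
          linarith
      calc (∫ ω, max (Ψ 0 ω - (M + (j : ℝ) * K)) 0 ∂μ)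
          ≤ ∫ _ω, γ * r ^ j ∂μ := integral_mono_ae (hInt 0 _) (integrable_const _) hle
        _ = γ * r ^ j := by simp
    | succ t ih =>
      intro j
      have hSm0 : MeasurableSet {ω | M ≤ Ψ t ω} :=
        ℱ.le t _ (measurableSet_le measurable_const (hadapted t))
      cases j with
      | zero =>
        have hst := step t M le_rfl
        have hH : Integrable (fun ω => max (Ψ t ω - (M + K)) 0 + K) μ :=
          (hInt t (M + K)).add (integrable_const K)
        have h1 : (∫ ω in {ω | M ≤ Ψ t ω},
              (q * max (Ψ t ω - (M + K)) 0 + p * max (Ψ t ω - (M - K)) 0) ∂μ)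
            ≤ ∫ ω in {ω | M ≤ Ψ t ω}, (max (Ψ t ω - (M + K)) 0 + K) ∂μ := by
          refine setIntegral_mono_on
            (((hInt t (M + K)).const_mul q).add ((hInt t (M - K)).const_mul p)).integrableOn
            hH.integrableOn hSm0 ?_
          intro ω hω
          have hu : (0 : ℝ) ≤ Ψ t ω - M := sub_nonneg.mpr hω
          have e1 : Ψ t ω - (M + K) = Ψ t ω - M - K := by ring
          have e2 : Ψ t ω - (M - K) = Ψ t ω - M + K := by ring
          rw [e1, e2]
          rw [max_eq_left (by linarith : (0 : ℝ) ≤ Ψ t ω - M + K)]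
          rcases le_or_gt (Ψ t ω - M) K with h' | h'
          · rw [max_eq_right (by linarith : Ψ t ω - M - K ≤ 0)]
            have hup : Ψ t ω - M + K ≤ 2 * K := by linarith
            have hb1 : p * (Ψ t ω - M + K) ≤ p * (2 * K) :=
              mul_le_mul_of_nonneg_left hup hp0
            have hb2 : p * (2 * K) = K - η := by
              rw [hpdef]
              exact div_mul_cancel₀ _ (by positivity : (2 * K : ℝ) ≠ 0)
            have : q * (0 : ℝ) = 0 := mul_zero q
            nlinarith
          · rw [max_eq_left (by linarith : (0 : ℝ) ≤ Ψ t ω - M - K)]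
            have hb : q * (Ψ t ω - M - K) + p * (Ψ t ω - M + K) = Ψ t ω - M - η := by
              rw [hpdef, hqdef, div_mul_eq_mul_div, div_mul_eq_mul_div, ← add_div,
                div_eq_iff (by positivity : (2 * K : ℝ) ≠ 0)]
              ring
            linarith
        have h2 : (∫ ω in {ω | M ≤ Ψ t ω}ᶜ, max (Ψ t ω - (M - K)) 0 ∂μ)
            ≤ ∫ ω in {ω | M ≤ Ψ t ω}ᶜ, (max (Ψ t ω - (M + K)) 0 + K) ∂μ := by
          refine setIntegral_mono_on (hInt t (M - K)).integrableOn hH.integrableOn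
            hSm0.compl ?_
          intro ω hω
          have hω' : Ψ t ω < M := by
            have := hω
            simp only [Set.mem_compl_iff, Set.mem_setOf_eq, not_le] at this
            exact this
          have hm1 : max (Ψ t ω - (M - K)) 0 ≤ K := max_le (by linarith) hK.le
          have hm2 := le_max_right (Ψ t ω - (M + K)) 0
          linarith
        have h3 := integral_add_compl hSm0 hH
        have h4 : (∫ ω, (max (Ψ t ω - (M + K)) 0 + K) ∂μ)
            = (∫ ω, max (Ψ t ω - (M + K)) 0 ∂μ) + K := by
          rw [integral_add (hInt t _) (integrable_const K)]
          simp
        have h5 := ih 1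
        have e1 : M + ((1 : ℕ) : ℝ) * K = M + K := by push_cast; ring
        rw [e1] at h5
        have e0 : M + ((0 : ℕ) : ℝ) * K = M := by push_cast; ring
        rw [e0]
        have hpow : γ * r ^ (0 : ℕ) = γ := by rw [pow_zero, mul_one]
        rw [hpow]
        have hr1 : γ * r ^ (1 : ℕ) = γ * r := by rw [pow_one]
        rw [hr1] at h5
        calc (∫ ω, max (Ψ (t + 1) ω - M) 0 ∂μ)
            ≤ (∫ ω in {ω | M ≤ Ψ t ω},
                (q * max (Ψ t ω - (M + K)) 0 + p * max (Ψ t ω - (M - K)) 0) ∂μ) +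
              ∫ ω in {ω | M ≤ Ψ t ω}ᶜ, max (Ψ t ω - (M - K)) 0 ∂μ := hst
          _ ≤ (∫ ω in {ω | M ≤ Ψ t ω}, (max (Ψ t ω - (M + K)) 0 + K) ∂μ) +
              ∫ ω in {ω | M ≤ Ψ t ω}ᶜ, (max (Ψ t ω - (M + K)) 0 + K) ∂μ := add_le_add h1 h2
          _ = (∫ ω, max (Ψ t ω - (M + K)) 0 ∂μ) + K := by rw [h3, h4]
          _ ≤ γ * r + K := by linarith
          _ = γ := hγr
      | succ i =>
        have hstep := step t (M + ((i : ℝ) + 1) * K)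
          (le_add_of_nonneg_right (by positivity))
        have e1 : M + ((i : ℝ) + 1) * K + K = M + ((i : ℝ) + 2) * K := by ring
        have e2 : M + ((i : ℝ) + 1) * K - K = M + (i : ℝ) * K := by ring
        rw [e1, e2] at hstep
        have hc : (∫ ω in {ω | M ≤ Ψ t ω}ᶜ, max (Ψ t ω - (M + (i : ℝ) * K)) 0 ∂μ) = 0 := by
          have hz : Set.EqOn (fun ω => max (Ψ t ω - (M + (i : ℝ) * K)) 0)
              (fun _ => (0 : ℝ)) {ω | M ≤ Ψ t ω}ᶜ := by
            intro ω hω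
            have hω' : Ψ t ω < M := by
              simp only [Set.mem_compl_iff, Set.mem_setOf_eq, not_le] at hω
              exact hω
            have hik : (0 : ℝ) ≤ (i : ℝ) * K := by positivity
            simp only
            rw [max_eq_right (by linarith)]
          rw [setIntegral_congr_fun hSm0.compl hz]
          simp
        have hs : (∫ ω in {ω | M ≤ Ψ t ω},
              (q * max (Ψ t ω - (M + ((i : ℝ) + 2) * K)) 0 +
               p * max (Ψ t ω - (M + (i : ℝ) * K)) 0) ∂μ)
            ≤ q * (∫ ω, max (Ψ t ω - (M + ((i : ℝ) + 2) * K)) 0 ∂μ) +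
              p * (∫ ω, max (Ψ t ω - (M + (i : ℝ) * K)) 0 ∂μ) := by
          have hint' : Integrable (fun ω =>
              q * max (Ψ t ω - (M + ((i : ℝ) + 2) * K)) 0 +
              p * max (Ψ t ω - (M + (i : ℝ) * K)) 0) μ :=
            ((hInt t _).const_mul q).add ((hInt t _).const_mul p)
          calc (∫ ω in {ω | M ≤ Ψ t ω},
                (q * max (Ψ t ω - (M + ((i : ℝ) + 2) * K)) 0 +
                 p * max (Ψ t ω - (M + (i : ℝ) * K)) 0) ∂μ)
              ≤ ∫ ω, (q * max (Ψ t ω - (M + ((i : ℝ) + 2) * K)) 0 +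
                 p * max (Ψ t ω - (M + (i : ℝ) * K)) 0) ∂μ := by
                refine setIntegral_le_integral hint' ?_
                filter_upwards with ω
                exact add_nonneg (mul_nonneg hq0 (le_max_right _ _))
                  (mul_nonneg hp0 (le_max_right _ _))
            _ = q * (∫ ω, max (Ψ t ω - (M + ((i : ℝ) + 2) * K)) 0 ∂μ) +
                p * (∫ ω, max (Ψ t ω - (M + (i : ℝ) * K)) 0 ∂μ) := by
                rw [integral_add ((hInt t _).const_mul q) ((hInt t _).const_mul p)]
                rw [integral_const_mul q _, integral_const_mul p _]
        have hia := ih (i + 2)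
        have hib := ih i
        have e3 : M + ((i + 2 : ℕ) : ℝ) * K = M + ((i : ℝ) + 2) * K := by push_cast; ring
        rw [e3] at hia
        have harith : q * (γ * r ^ (i + 2)) + p * (γ * r ^ i) = γ * r ^ (i + 1) := by
          have hp2 : r ^ (i + 2) = r ^ i * r ^ 2 := by ring
          have hp1 : r ^ (i + 1) = r ^ i * r := by ring
          rw [hp2, hp1]
          linear_combination (γ * r ^ i) * hqr2
        have egoal : M + ((i + 1 : ℕ) : ℝ) * K = M + ((i : ℝ) + 1) * K := by push_cast; ring
        rw [egoal]
        have hqmul : q * (∫ ω, max (Ψ t ω - (M + ((i : ℝ) + 2) * K)) 0 ∂μ)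
            ≤ q * (γ * r ^ (i + 2)) := mul_le_mul_of_nonneg_left hia hq0
        have hpmul : p * (∫ ω, max (Ψ t ω - (M + (i : ℝ) * K)) 0 ∂μ)
            ≤ p * (γ * r ^ i) := mul_le_mul_of_nonneg_left hib hp0
        calc (∫ ω, max (Ψ (t + 1) ω - (M + ((i : ℝ) + 1) * K)) 0 ∂μ)
            ≤ _ + _ := hstep
          _ ≤ (q * (∫ ω, max (Ψ t ω - (M + ((i : ℝ) + 2) * K)) 0 ∂μ) +
              p * (∫ ω, max (Ψ t ω - (M + (i : ℝ) * K)) 0 ∂μ)) + 0 := by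
              refine add_le_add hs ?_
              rw [hc]
          _ = q * (∫ ω, max (Ψ t ω - (M + ((i : ℝ) + 2) * K)) 0 ∂μ) +
              p * (∫ ω, max (Ψ t ω - (M + (i : ℝ) * K)) 0 ∂μ) := by ring
          _ ≤ q * (γ * r ^ (i + 2)) + p * (γ * r ^ i) := add_le_add hqmul hpmul
          _ = γ * r ^ (i + 1) := harith
  -- conclusion
  intro t
  have h0 := hmain t 0
  have e0 : M + ((0 : ℕ) : ℝ) * K = M := by push_cast; ring
  rw [e0] at h0
  have hpow : γ * r ^ (0 : ℕ) = γ := by rw [pow_zero, mul_one]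
  rw [hpow] at h0
  have hmono : (∫ ω, Ψ t ω ∂μ) ≤ ∫ ω, (M + max (Ψ t ω - M) 0) ∂μ := by
    refine integral_mono (hint t) ((integrable_const M).add (hInt t M)) ?_
    intro ω
    have := le_max_left (Ψ t ω - M) 0
    simp only
    linarith
  have hsplit : (∫ ω, (M + max (Ψ t ω - M) 0) ∂μ)
      = M + ∫ ω, max (Ψ t ω - M) 0 ∂μ := by
    rw [integral_add (integrable_const M) (hInt t M)]
    simp
  have hfin : (∫ ω, Ψ t ω ∂μ) ≤ M + γ := by
    rw [hsplit] at hmono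
    linarith
  have heq : M + γ = K * (1 + (⌈B / K⌉ : ℝ)) + K * ((K - η) / (2 * η)) := by
    rw [hMdef, hγdef]
    field_simp
    ring
  linarith
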